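/- Let p ≥ 1 be an integer and θ > 0, and suppose A is maximal monotone with A⁻¹(0) = {x : 0 ∈ A x} nonempty. Let (x, λ, y) be a global solution of the closed-loop control system on [0, ∞) with λ nondecreasing. Then there exists x̄ ∈ H with 0 ∈ A x̄ such that x(t) converges weakly to x̄ as t → +∞, i.e. ⟪x(t) − x̄, h⟫ → 0 for every h ∈ H. -/

import Mathlib

open scoped Pointwise
open RealInnerProductSpace Filter Topology Set Metric

/-- A solution of the closed-loop control system on the time set `T`:
`x` is continuously differentiable with `x'(t) = y(t) - x(t)`,
`y(t)` is the resolvent point `(I + λ(t)A)⁻¹ x(t)` (i.e. `x(t) - y(t) ∈ λ(t) • A (y t)`),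
`λ` is continuous and positive, and the algebraic equation
`λ(t) ‖y(t) - x(t)‖^{p-1} = θ` holds. -/
def IsCLSolution {H : Type*} [NormedAddCommGroup H] [InnerProductSpace ℝ H]
    (A : H → Set H) (p : ℕ) (θ : ℝ) (T : Set ℝ)
    (x : ℝ → H) (lam : ℝ → ℝ) (y : ℝ → H) : Prop :=
  (∀ t ∈ T, 0 < lam t) ∧ ContinuousOn lam T ∧
  (∀ t ∈ T, x t - y t ∈ lam t • A (y t)) ∧
  (∀ t ∈ T, HasDerivWithinAt x (y t - x t) T t) ∧
  ContinuousOn (fun t => y t - x t) T ∧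
  (∀ t ∈ T, lam t * ‖y t - x t‖ ^ (p - 1) = θ)

/-- Antitonicity on `[0,∞)` from a nonpositive derivative. -/
lemma aux_antitoneOn {f : ℝ → ℝ} {f' : ℝ → ℝ}
    (hf : ∀ t ∈ Ici (0:ℝ), HasDerivWithinAt f (f' t) (Ici 0) t)
    (hf' : ∀ t ∈ Ici (0:ℝ), f' t ≤ 0) : AntitoneOn f (Ici 0) := by
  apply antitoneOn_of_deriv_nonpos (convex_Ici 0)
  · exact fun t ht => (hf t ht).continuousWithinAt
  · intro t ht
    rw [interior_Ici] at ht
    exact ((hf t (le_of_lt (mem_Ioi.mp ht))).hasDerivAt (Ici_mem_nhds ht)).differentiableAt.differentiableWithinAt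
  · intro t ht
    rw [interior_Ici] at ht
    rw [((hf t (le_of_lt (mem_Ioi.mp ht))).hasDerivAt (Ici_mem_nhds ht)).deriv]
    exact hf' t (le_of_lt (mem_Ioi.mp ht))

/-- A nonnegative function antitone on `[0,∞)` converges at `+∞`. -/
lemma aux_tendsto {f : ℝ → ℝ} (hf : AntitoneOn f (Ici 0))
    (h0 : ∀ t ∈ Ici (0:ℝ), 0 ≤ f t) :
    ∃ c, 0 ≤ c ∧ Tendsto f atTop (𝓝 c) ∧ ∀ t ∈ Ici (0:ℝ), c ≤ f t := by
  set g : ℝ → ℝ := fun t => f (max t 0) with hg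
  have hga : Antitone g := fun a b hab =>
    hf (le_max_right a 0) (le_max_right b 0) (max_le_max hab le_rfl)
  have hbdd : BddBelow (range g) := ⟨0, by rintro _ ⟨t, rfl⟩; exact h0 _ (le_max_right t 0)⟩
  have htg := tendsto_atTop_ciInf hga hbdd
  refine ⟨_, le_ciInf fun t => h0 (max t 0) (le_max_right t 0), ?_, fun t ht => ?_⟩
  · refine htg.congr' ?_
    filter_upwards [eventually_ge_atTop (0:ℝ)] with t ht
    simp [hg, max_eq_left ht]
  · calc (⨅ i, g i) ≤ g t := ciInf_le hbdd t
      _ = f t := by simp [hg, max_eq_left (mem_Ici.mp ht)]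

/-- Simple inner-product algebra fact. -/
lemma aux_inner {H : Type*} [NormedAddCommGroup H] [InnerProductSpace ℝ H] (u v : H)
    (h : 0 ≤ ⟪u - v, v⟫) : ⟪v - u, u⟫ ≤ 0 := by
  have e1 : ⟪u - v, u - v⟫ = ⟪u - v, u⟫ - ⟪u - v, v⟫ := inner_sub_right _ _ _
  have e2 : ⟪v - u, u⟫ = -⟪u - v, u⟫ := by rw [← neg_sub u v, inner_neg_left]
  have e3 : (0:ℝ) ≤ ⟪u - v, u - v⟫ := real_inner_self_nonneg
  linarith

/-- Derivative of `t ↦ ⟪f t, f t⟫`. -/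
lemma aux_deriv_inner_self {H : Type*} [NormedAddCommGroup H] [InnerProductSpace ℝ H]
    {f : ℝ → H} {f' : H} {t : ℝ} (hf : HasDerivWithinAt f f' (Ici 0) t) :
    HasDerivWithinAt (fun u => ⟪f u, f u⟫) (2 * ⟪f', f t⟫) (Ici 0) t := by
  have h2 := hf.inner (𝕜 := ℝ) hf
  have h3 : ⟪f t, f'⟫ + ⟪f', f t⟫ = 2 * ⟪f', f t⟫ := by rw [real_inner_comm]; ring
  rwa [h3] at h2

set_option maxHeartbeats 2000000 in
/-- If `A` is maximal monotone with `A⁻¹(0) ≠ ∅`, then the trajectory of a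
global solution of the closed-loop control system converges weakly to some zero of `A`. -/
theorem stmt_8 {H : Type*} [NormedAddCommGroup H] [InnerProductSpace ℝ H] [CompleteSpace H]
    (A : H → Set H)
    (hmono : ∀ x y u v : H, u ∈ A x → v ∈ A y → 0 ≤ ⟪u - v, x - y⟫)
    (hmax : ∀ v x : H, (∀ z u : H, u ∈ A z → 0 ≤ ⟪v - u, x - z⟫) → v ∈ A x)
    (hne : ∃ z : H, 0 ∈ A z)
    (p : ℕ) (hp : 1 ≤ p) (θ : ℝ) (hθ : 0 < θ)
    (x : ℝ → H) (lam : ℝ → ℝ) (y : ℝ → H)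
    (hsol : IsCLSolution A p θ (Ici 0) x lam y)
    (hlam : MonotoneOn lam (Ici 0)) :
    ∃ xbar : H, 0 ∈ A xbar ∧
      ∀ h : H, Tendsto (fun t => ⟪x t - xbar, h⟫) atTop (nhds 0) := by
  classical
  obtain ⟨z0, hz0⟩ := hne
  obtain ⟨hlampos, hlamcont, hres, hderiv, hcont, halg⟩ := hsol
  -- the resolvent element
  have hresel : ∀ t ∈ Ici (0:ℝ), (lam t)⁻¹ • (x t - y t) ∈ A (y t) := by
    intro t ht
    obtain ⟨a, ha, hax⟩ := Set.mem_smul_set.mp (hres t ht)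
    have : (lam t)⁻¹ • (x t - y t) = a := by
      rw [← hax, smul_smul, inv_mul_cancel₀ (hlampos t ht).ne', one_smul]
    rwa [this]
  -- key inequality against zeros
  have hkey : ∀ z, 0 ∈ A z → ∀ t ∈ Ici (0:ℝ),
      ⟪y t - x t, x t - z⟫ ≤ -‖y t - x t‖ ^ 2 := by
    intro z hz t ht
    have h1 : 0 ≤ ⟪(lam t)⁻¹ • (x t - y t) - 0, y t - z⟫ :=
      hmono _ _ _ _ (hresel t ht) hz
    rw [sub_zero, real_inner_smul_left] at h1
    have hlp : 0 < (lam t)⁻¹ := inv_pos.mpr (hlampos t ht)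
    have h2 : 0 ≤ ⟪x t - y t, y t - z⟫ := by nlinarith
    have h3 : ⟪y t - x t, x t - z⟫ = ⟪y t - x t, y t - z⟫ - ⟪y t - x t, y t - x t⟫ := by
      rw [← inner_sub_right]
      congr 1
      abel
    have h4 : ⟪y t - x t, y t - z⟫ = -⟪x t - y t, y t - z⟫ := by
      rw [← neg_sub (x t) (y t), inner_neg_left]
    have h5 : ⟪y t - x t, y t - x t⟫ = ‖y t - x t‖ ^ 2 := real_inner_self_eq_norm_sq _
    rw [h3, h4, h5]
    linarith
  -- derivative of the Lyapunov functions
  have hEd : ∀ z : H, ∀ t ∈ Ici (0:ℝ), HasDerivWithinAt (fun t => ⟪x t - z, x t - z⟫)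
      (2 * ⟪y t - x t, x t - z⟫) (Ici 0) t := by
    intro z t ht
    exact aux_deriv_inner_self ((hderiv t ht).sub_const z)
  have hEanti : ∀ z : H, 0 ∈ A z → AntitoneOn (fun t => ⟪x t - z, x t - z⟫) (Ici 0) := by
    intro z hz
    refine aux_antitoneOn (f' := fun t => 2 * ⟪y t - x t, x t - z⟫)
      (fun t ht => hEd z t ht) (fun t ht => ?_)
    show 2 * ⟪y t - x t, x t - z⟫ ≤ 0
    nlinarith [hkey z hz t ht, sq_nonneg ‖y t - x t‖]
  have hE : ∀ z : H, 0 ∈ A z → ∃ L, Tendsto (fun t => ⟪x t - z, x t - z⟫) atTop (𝓝 L) := by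
    intro z hz
    obtain ⟨c, -, hc, -⟩ := aux_tendsto (hEanti z hz) (fun t _ => real_inner_self_nonneg)
    exact ⟨c, hc⟩
  -- boundedness
  have hxb : ∀ t ∈ Ici (0:ℝ), ‖x t - z0‖ ≤ ‖x 0 - z0‖ := by
    intro t ht
    have h1 : ⟪x t - z0, x t - z0⟫ ≤ ⟪x 0 - z0, x 0 - z0⟫ :=
      hEanti z0 hz0 (mem_Ici.mpr le_rfl) ht ht
    rw [real_inner_self_eq_norm_sq, real_inner_self_eq_norm_sq] at h1
    exact (pow_le_pow_iff_left₀ (norm_nonneg _) (norm_nonneg _) two_ne_zero).mp h1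
  -- the speed is antitone
  have hnanti : AntitoneOn (fun t => ‖y t - x t‖) (Ici 0) := by
    obtain hp2 | hp1 : 2 ≤ p ∨ p = 1 := by omega
    · intro s hs t ht hst
      show ‖y t - x t‖ ≤ ‖y s - x s‖
      have hls : 0 < lam s := hlampos s hs
      have hnt : 0 ≤ ‖y t - x t‖ ^ (p - 1) := pow_nonneg (norm_nonneg _) _
      have h3 : lam s * ‖y t - x t‖ ^ (p - 1) ≤ lam s * ‖y s - x s‖ ^ (p - 1) := by
        calc lam s * ‖y t - x t‖ ^ (p - 1)
            ≤ lam t * ‖y t - x t‖ ^ (p - 1) :=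
              mul_le_mul_of_nonneg_right (hlam hs ht hst) hnt
          _ = θ := halg t ht
          _ = lam s * ‖y s - x s‖ ^ (p - 1) := (halg s hs).symm
      have h4 := le_of_mul_le_mul_left h3 hls
      exact (pow_le_pow_iff_left₀ (norm_nonneg _) (norm_nonneg _) (by omega)).mp h4
    · -- p = 1, so lam ≡ θ
      have hlθ : ∀ t ∈ Ici (0:ℝ), lam t = θ := by
        intro t ht
        have h1 := halg t ht
        rwa [hp1, Nat.sub_self, pow_zero, mul_one] at h1
      have hm2 : ∀ s ∈ Ici (0:ℝ), ∀ t ∈ Ici (0:ℝ),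
          ⟪(y t - x t) - (y s - x s), x t - x s⟫ ≤ 0 := by
        intro s hs t ht
        have h1 : 0 ≤ ⟪(lam t)⁻¹ • (x t - y t) - (lam s)⁻¹ • (x s - y s), y t - y s⟫ :=
          hmono _ _ _ _ (hresel t ht) (hresel s hs)
        rw [hlθ t ht, hlθ s hs, ← smul_sub, real_inner_smul_left] at h1
        have hip : 0 < θ⁻¹ := inv_pos.mpr hθ
        have h2 : 0 ≤ ⟪(x t - y t) - (x s - y s), y t - y s⟫ := by nlinarith
        have huv : (x t - y t) - (x s - y s) = (x t - x s) - (y t - y s) := by abel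
        rw [huv] at h2
        have h4 := aux_inner _ _ h2
        have hvu : (y t - y s) - (x t - x s) = (y t - x t) - (y s - x s) := by abel
        rwa [hvu] at h4
      -- derivative of shifted trajectory
      have hshiftderiv : ∀ h : ℝ, 0 ≤ h → ∀ t ∈ Ici (0:ℝ),
          HasDerivWithinAt (fun u => x (u + h)) (y (t + h) - x (t + h)) (Ici 0) t := by
        intro h hh t ht
        have hth : t + h ∈ Ici (0:ℝ) := by
          simp only [mem_Ici] at ht ⊢; linarith
        have h1 := hderiv (t + h) hth
        have h2 : HasDerivWithinAt (fun u : ℝ => u + h) 1 (Ici 0) t :=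
          ((hasDerivAt_id t).add_const h).hasDerivWithinAt
        have h3 := HasDerivWithinAt.scomp t h1 h2 (fun u hu => by
          simp only [mem_Ici] at hu ⊢; linarith)
        simpa [Function.comp_def] using h3
      have hdiffanti : ∀ h : ℝ, 0 ≤ h → AntitoneOn
          (fun t => ⟪x (t + h) - x t, x (t + h) - x t⟫) (Ici 0) := by
        intro h hh
        refine aux_antitoneOn
          (f' := fun t => 2 * ⟪(y (t + h) - x (t + h)) - (y t - x t), x (t + h) - x t⟫)
          (fun t ht => ?_) (fun t ht => ?_)
        · exact aux_deriv_inner_self ((hshiftderiv h hh t ht).sub (hderiv t ht))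
        · have hth : t + h ∈ Ici (0:ℝ) := by
            simp only [mem_Ici] at ht ⊢; linarith
          have := hm2 t ht (t + h) hth
          show 2 * ⟪(y (t + h) - x (t + h)) - (y t - x t), x (t + h) - x t⟫ ≤ 0
          linarith
      intro s hs t ht hst
      show ‖y t - x t‖ ≤ ‖y s - x s‖
      have hslope : ∀ r ∈ Ici (0:ℝ),
          Tendsto (fun u => ‖slope x r u‖) (𝓝[>] r) (𝓝 ‖y r - x r‖) := by
        intro r hr
        have h1 : Tendsto (slope x r) (𝓝[Ici 0 \ {r}] r) (𝓝 (y r - x r)) :=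
          hasDerivWithinAt_iff_tendsto_slope.mp (hderiv r hr)
        have h2 : 𝓝[>] r ≤ 𝓝[Ici 0 \ {r}] r :=
          nhdsWithin_mono r (fun u hu => ⟨show (0:ℝ) ≤ u from le_trans (mem_Ici.mp hr) (le_of_lt (mem_Ioi.mp hu)), (mem_Ioi.mp hu).ne'⟩)
        exact (h1.mono_left h2).norm
      have hcmp : ∀ u ∈ Ioi t, ‖slope x t u‖ ≤ ‖slope x s (s + (u - t))‖ := by
        intro u hu
        rw [mem_Ioi] at hu
        have hh : (0:ℝ) ≤ u - t := by linarith
        have h1 : ⟪x (t + (u - t)) - x t, x (t + (u - t)) - x t⟫ ≤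
            ⟪x (s + (u - t)) - x s, x (s + (u - t)) - x s⟫ := hdiffanti (u - t) hh hs ht hst
        rw [real_inner_self_eq_norm_sq, real_inner_self_eq_norm_sq] at h1
        have h2 : ‖x (t + (u - t)) - x t‖ ≤ ‖x (s + (u - t)) - x s‖ :=
          (pow_le_pow_iff_left₀ (norm_nonneg _) (norm_nonneg _) two_ne_zero).mp h1
        have htu : t + (u - t) = u := by ring
        rw [htu] at h2
        simp only [slope, vsub_eq_sub, norm_smul, norm_inv, Real.norm_eq_abs]
        have he : s + (u - t) - s = u - t := by ring
        rw [he]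
        exact mul_le_mul_of_nonneg_left h2 (by positivity)
      have hshift : Tendsto (fun u => s + (u - t)) (𝓝[>] t) (𝓝[>] s) := by
        apply tendsto_nhdsWithin_of_tendsto_nhds_of_eventually_within
        · have h1 : ContinuousAt (fun u : ℝ => s + (u - t)) t := by fun_prop
          have h2 := h1.tendsto.mono_left (nhdsWithin_le_nhds (s := Ioi t))
          simpa using h2
        · filter_upwards [self_mem_nhdsWithin] with u hu
          simp only [mem_Ioi] at hu ⊢
          linarith
      refine le_of_tendsto_of_tendsto (hslope t ht) ((hslope s hs).comp hshift) ?_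
      filter_upwards [self_mem_nhdsWithin] with u hu
      exact hcmp u hu
  -- integral bound and convergence of speed to 0
  have hgc : Continuous (fun s : ℝ => max s 0) := continuous_id.max continuous_const
  have hgcont : Continuous (fun s : ℝ => ‖y (max s 0) - x (max s 0)‖ ^ 2) := by
    have h2 : Continuous fun s : ℝ => y (max s 0) - x (max s 0) :=
      hcont.comp_continuous hgc (fun s => le_max_right s 0)
    exact h2.norm.pow 2
  have hId : ∀ t : ℝ, HasDerivAt (fun t => ∫ s in (0:ℝ)..t, ‖y (max s 0) - x (max s 0)‖ ^ 2)
      (‖y (max t 0) - x (max t 0)‖ ^ 2) t := by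
    intro t
    exact intervalIntegral.integral_hasDerivAt_right (hgcont.intervalIntegrable _ _)
      (hgcont.stronglyMeasurableAtFilter _ _) hgcont.continuousAt
  have hIbound : ∀ t ∈ Ici (0:ℝ),
      2 * (∫ s in (0:ℝ)..t, ‖y (max s 0) - x (max s 0)‖ ^ 2) ≤ ⟪x 0 - z0, x 0 - z0⟫ := by
    have hanti : AntitoneOn (fun t => ⟪x t - z0, x t - z0⟫ +
        2 * ∫ s in (0:ℝ)..t, ‖y (max s 0) - x (max s 0)‖ ^ 2) (Ici 0) := by
      refine aux_antitoneOn
        (f' := fun t => 2 * ⟪y t - x t, x t - z0⟫ + 2 * ‖y (max t 0) - x (max t 0)‖ ^ 2)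
        (fun t ht => ?_) (fun t ht => ?_)
      · exact (hEd z0 t ht).add ((hId t).const_mul 2).hasDerivWithinAt
      · have h1 := hkey z0 hz0 t ht
        show 2 * ⟪y t - x t, x t - z0⟫ + 2 * ‖y (max t 0) - x (max t 0)‖ ^ 2 ≤ 0
        rw [max_eq_left ht]
        have h2 : ‖y t - x t‖ ^ 2 = ‖y t - x t‖ ^ 2 := rfl
        linarith
    intro t ht
    have h1 : ⟪x t - z0, x t - z0⟫ + 2 * (∫ s in (0:ℝ)..t, ‖y (max s 0) - x (max s 0)‖ ^ 2) ≤
        ⟪x 0 - z0, x 0 - z0⟫ + 2 * ∫ s in (0:ℝ)..(0:ℝ), ‖y (max s 0) - x (max s 0)‖ ^ 2 :=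
      hanti (mem_Ici.mpr le_rfl) ht ht
    rw [intervalIntegral.integral_same] at h1
    have h3 : (0:ℝ) ≤ ⟪x t - z0, x t - z0⟫ := real_inner_self_nonneg
    simp only [mul_zero, add_zero] at h1
    linarith
  obtain ⟨c, hc0, hcT, hclb⟩ := aux_tendsto hnanti (fun t _ => norm_nonneg _)
  have hczero : c = 0 := by
    by_contra hcne
    have hcpos : 0 < c := lt_of_le_of_ne hc0 (Ne.symm hcne)
    have hR2nn : (0:ℝ) ≤ ⟪x 0 - z0, x 0 - z0⟫ := real_inner_self_nonneg
    set T : ℝ := ⟪x 0 - z0, x 0 - z0⟫ / (2 * c ^ 2) + 1 with hT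
    have hTpos : (0:ℝ) ≤ T := by positivity
    have hlow : c ^ 2 * T ≤ ∫ s in (0:ℝ)..T, ‖y (max s 0) - x (max s 0)‖ ^ 2 := by
      have h1 : ∀ s ∈ Icc (0:ℝ) T, c ^ 2 ≤ ‖y (max s 0) - x (max s 0)‖ ^ 2 := by
        intro s _
        exact pow_le_pow_left₀ hc0 (hclb (max s 0) (le_max_right s 0)) 2
      have hconst : IntervalIntegrable (fun _ : ℝ => c ^ 2) MeasureTheory.volume 0 T :=
        intervalIntegrable_const
      have h2 := intervalIntegral.integral_mono_on hTpos
        hconst (hgcont.intervalIntegrable 0 T) h1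
      simpa [mul_comm] using h2
    have hup := hIbound T hTpos
    have hcan : 2 * (c ^ 2 * T) = ⟪x 0 - z0, x 0 - z0⟫ + 2 * c ^ 2 := by
      rw [hT]; field_simp
    nlinarith
  rw [hczero] at hcT
  -- weak-* compactness setup
  set M : ℝ := ‖x 0 - z0‖ + ‖z0‖ with hM
  have hxM : ∀ t ∈ Ici (0:ℝ), ‖x t‖ ≤ M := by
    intro t ht
    calc ‖x t‖ = ‖(x t - z0) + z0‖ := by rw [sub_add_cancel]
      _ ≤ ‖x t - z0‖ + ‖z0‖ := norm_add_le _ _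
      _ ≤ M := by have := hxb t ht; rw [hM]; linarith
  set f : ℝ → WeakDual ℝ H :=
    fun t => StrongDual.toWeakDual (InnerProductSpace.toDual ℝ H (x t)) with hfdef
  set K : Set (WeakDual ℝ H) :=
    (WeakDual.toStrongDual (𝕜 := ℝ) (E := H)) ⁻¹' closedBall (0 : StrongDual ℝ H) M
    with hKdef
  have hKc : IsCompact K := WeakDual.isCompact_closedBall (𝕜 := ℝ) (E := H) 0 M
  have hfK : ∀ t ∈ Ici (0:ℝ), f t ∈ K := by
    intro t ht
    simp only [hKdef, hfdef, mem_preimage, mem_closedBall, dist_zero_right]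
    show ‖(InnerProductSpace.toDual ℝ H) (x t)‖ ≤ M
    rw [LinearIsometryEquiv.norm_map]
    exact hxM t ht
  -- analysis of cluster points
  have hcluster : ∀ φ : WeakDual ℝ H, MapClusterPt φ atTop f →
      ∃ (w : H) (G : Filter ℝ), 0 ∈ A w ∧ (∀ h : H, φ h = ⟪w, h⟫) ∧ G.NeBot ∧ G ≤ atTop ∧
        (∀ h : H, Tendsto (fun t => ⟪x t, h⟫) G (𝓝 ⟪w, h⟫)) := by
    intro φ hφ
    set G : Filter ℝ := atTop ⊓ comap f (𝓝 φ) with hG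
    have hGne : G.NeBot := by
      have h1 : (map f atTop ⊓ 𝓝 φ).NeBot := by
        rw [inf_comm]; exact hφ
      rw [← Filter.push_pull] at h1
      exact (Filter.map_neBot_iff f).mp h1
    haveI := hGne
    have hGle : G ≤ atTop := inf_le_left
    have htf : Tendsto f G (𝓝 φ) := tendsto_iff_comap.mpr inf_le_right
    set w : H := (InnerProductSpace.toDual ℝ H).symm (WeakDual.toStrongDual φ) with hw
    have hφw : ∀ h : H, φ h = ⟪w, h⟫ := by
      intro h
      rw [hw, InnerProductSpace.toDual_symm_apply]
      rfl
    have hxwG : ∀ h : H, Tendsto (fun t => ⟪x t, h⟫) G (𝓝 ⟪w, h⟫) := by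
      intro h
      have h1 : Tendsto (fun ψ : WeakDual ℝ H => ψ h) (𝓝 φ) (𝓝 (φ h)) :=
        (WeakDual.eval_continuous h).tendsto φ
      have h2 := h1.comp htf
      have h3 : ((fun ψ : WeakDual ℝ H => ψ h) ∘ f) = fun t => ⟪x t, h⟫ := by
        funext t
        show (InnerProductSpace.toDual ℝ H (x t)) h = ⟪x t, h⟫
        exact InnerProductSpace.toDual_apply_apply
      rw [h3, hφw h] at h2
      exact h2
    refine ⟨w, G, ?_, hφw, hGne, hGle, hxwG⟩
    apply hmax
    intro z u hu
    have hEv : ∀ᶠ t in G, (0:ℝ) ≤ ⟪(lam t)⁻¹ • (x t - y t) - u, y t - z⟫ := by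
      filter_upwards [hGle (eventually_ge_atTop 0)] with t ht
      exact hmono _ _ _ _ (hresel t ht) hu
    set C : ℝ := ‖y 0 - x 0‖ + ‖x 0 - z0‖ + ‖z0 - z‖ with hC
    have hyz : ∀ t ∈ Ici (0:ℝ), ‖y t - z‖ ≤ C := by
      intro t ht
      have h1 : y t - z = (y t - x t) + (x t - z0) + (z0 - z) := by abel
      rw [h1]
      have h2 : ‖y t - x t‖ ≤ ‖y 0 - x 0‖ := hnanti (mem_Ici.mpr le_rfl) ht ht
      have h3 := hxb t ht
      calc ‖(y t - x t) + (x t - z0) + (z0 - z)‖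
          ≤ ‖y t - x t‖ + ‖x t - z0‖ + ‖z0 - z‖ := norm_add₃_le
        _ ≤ C := by rw [hC]; linarith
    have hT1 : Tendsto (fun t => ⟪(lam t)⁻¹ • (x t - y t), y t - z⟫) G (𝓝 0) := by
      apply squeeze_zero_norm' (a := fun t => ((lam 0)⁻¹ * C) * ‖y t - x t‖)
      · filter_upwards [hGle (eventually_ge_atTop 0)] with t ht
        have hls : 0 < lam 0 := hlampos 0 (mem_Ici.mpr le_rfl)
        have hle : lam 0 ≤ lam t := hlam (mem_Ici.mpr le_rfl) ht ht
        have hinv : (lam t)⁻¹ ≤ (lam 0)⁻¹ := by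
          apply inv_anti₀ hls hle
        have hCnn : 0 ≤ C := le_trans (norm_nonneg _) (hyz 0 (mem_Ici.mpr le_rfl))
        calc ‖⟪(lam t)⁻¹ • (x t - y t), y t - z⟫‖
            ≤ ‖(lam t)⁻¹ • (x t - y t)‖ * ‖y t - z‖ := norm_inner_le_norm _ _
          _ = (lam t)⁻¹ * ‖x t - y t‖ * ‖y t - z‖ := by
              rw [norm_smul, norm_inv, Real.norm_eq_abs, abs_of_pos (hlampos t ht)]
          _ = (lam t)⁻¹ * ‖y t - x t‖ * ‖y t - z‖ := by rw [norm_sub_rev]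
          _ ≤ (lam 0)⁻¹ * ‖y t - x t‖ * C := by
              have h0 : 0 ≤ (lam 0)⁻¹ := (inv_pos.mpr hls).le
              have h1 : 0 ≤ ‖y t - x t‖ := norm_nonneg _
              have h2 := hyz t ht
              have h3 : (lam t)⁻¹ * ‖y t - x t‖ ≤ (lam 0)⁻¹ * ‖y t - x t‖ :=
                mul_le_mul_of_nonneg_right hinv h1
              have h4 : 0 ≤ (lam 0)⁻¹ * ‖y t - x t‖ := mul_nonneg h0 h1
              calc (lam t)⁻¹ * ‖y t - x t‖ * ‖y t - z‖
                  ≤ (lam 0)⁻¹ * ‖y t - x t‖ * ‖y t - z‖ :=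
                    mul_le_mul_of_nonneg_right h3 (norm_nonneg _)
                _ ≤ (lam 0)⁻¹ * ‖y t - x t‖ * C := mul_le_mul_of_nonneg_left h2 h4
          _ = ((lam 0)⁻¹ * C) * ‖y t - x t‖ := by ring
      · have h1 := (hcT.const_mul ((lam 0)⁻¹ * C)).mono_left hGle
        simpa using h1
    have hT2 : Tendsto (fun t => ⟪u, y t - x t⟫) G (𝓝 0) := by
      apply squeeze_zero_norm' (a := fun t => ‖u‖ * ‖y t - x t‖)
      · exact Eventually.of_forall fun t => norm_inner_le_norm _ _
      · have h1 := (hcT.const_mul ‖u‖).mono_left hGle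
        simpa using h1
    have hT3 : Tendsto (fun t => ⟪x t, u⟫) G (𝓝 ⟪w, u⟫) := hxwG u
    have hident : ∀ t, ⟪(lam t)⁻¹ • (x t - y t) - u, y t - z⟫ =
        ⟪(lam t)⁻¹ • (x t - y t), y t - z⟫ - ⟪u, y t - x t⟫ - ⟪x t, u⟫ + ⟪u, z⟫ := by
      intro t
      simp only [inner_sub_left, inner_sub_right]
      rw [real_inner_comm (x t) u]
      ring
    have hlim : Tendsto (fun t => ⟪(lam t)⁻¹ • (x t - y t) - u, y t - z⟫) G
        (𝓝 (0 - 0 - ⟪w, u⟫ + ⟪u, z⟫)) := by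
      refine Tendsto.congr (fun t => (hident t).symm) ?_
      exact ((hT1.sub hT2).sub hT3).add_const _
    have h0le : (0:ℝ) ≤ 0 - 0 - ⟪w, u⟫ + ⟪u, z⟫ := ge_of_tendsto hlim hEv
    have hfin : ⟪(0:H) - u, w - z⟫ = 0 - 0 - ⟪w, u⟫ + ⟪u, z⟫ := by
      simp only [inner_sub_left, inner_sub_right, inner_zero_left]
      rw [real_inner_comm u w]
      ring
    rw [hfin]
    exact h0le
  -- existence of a cluster point
  have hmapK : map f atTop ≤ 𝓟 K := by
    rw [le_principal_iff, mem_map]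
    exact (eventually_ge_atTop 0).mono fun t ht => hfK t ht
  obtain ⟨φ0, hφ0K, hφ0⟩ := hKc.exists_clusterPt hmapK
  obtain ⟨w0, G0, hw0A, hφ0w, hG0ne, hG0le, hxw0⟩ := hcluster φ0 hφ0
  -- uniqueness of cluster points (Opial)
  have huniq : ∀ ψ ∈ K, MapClusterPt ψ atTop f → ψ = φ0 := by
    intro ψ _ hψ
    obtain ⟨w1, G1, hw1A, hψw, hG1ne, hG1le, hxw1⟩ := hcluster ψ hψ
    obtain ⟨L0, hL0⟩ := hE w0 hw0A
    obtain ⟨L1, hL1⟩ := hE w1 hw1A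
    have hP : Tendsto (fun t => ⟪x t, w1⟫ - ⟪x t, w0⟫) atTop
        (𝓝 ((⟪w1, w1⟫ - ⟪w0, w0⟫ - (L1 - L0)) / 2)) := by
      have hidentD : ∀ t, ⟪x t, w1⟫ - ⟪x t, w0⟫ =
          (⟪w1, w1⟫ - ⟪w0, w0⟫ - (⟪x t - w1, x t - w1⟫ - ⟪x t - w0, x t - w0⟫)) / 2 := by
        intro t
        simp only [inner_sub_left, inner_sub_right]
        rw [real_inner_comm (x t) w1, real_inner_comm (x t) w0]
        ring
      refine Tendsto.congr (fun t => (hidentD t).symm) ?_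
      exact (tendsto_const_nhds.sub (hL1.sub hL0)).div_const 2
    haveI := hG1ne
    haveI := hG0ne
    have e1 : ⟪w1, w1⟫ - ⟪w1, w0⟫ = (⟪w1, w1⟫ - ⟪w0, w0⟫ - (L1 - L0)) / 2 :=
      tendsto_nhds_unique ((hxw1 w1).sub (hxw1 w0)) (hP.mono_left hG1le)
    have e0 : ⟪w0, w1⟫ - ⟪w0, w0⟫ = (⟪w1, w1⟫ - ⟪w0, w0⟫ - (L1 - L0)) / 2 :=
      tendsto_nhds_unique ((hxw0 w1).sub (hxw0 w0)) (hP.mono_left hG0le)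
    have hww : ⟪w1 - w0, w1 - w0⟫ = 0 := by
      have hsym : ⟪w0, w1⟫ = ⟪w1, w0⟫ := real_inner_comm _ _
      simp only [inner_sub_left, inner_sub_right]
      linarith
    have hw10 : w1 = w0 := by
      have h1 : w1 - w0 = 0 := inner_self_eq_zero.mp hww
      exact sub_eq_zero.mp h1
    apply DFunLike.ext
    intro h
    rw [hψw h, hφ0w h, hw10]
  -- conclusion
  have htends : Tendsto f atTop (𝓝 φ0) :=
    hKc.tendsto_nhds_of_unique_mapClusterPt
      ((eventually_ge_atTop 0).mono fun t ht => hfK t ht) huniq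
  refine ⟨w0, hw0A, fun h => ?_⟩
  have h1 : Tendsto (fun ψ : WeakDual ℝ H => ψ h) (𝓝 φ0) (𝓝 (φ0 h)) :=
    (WeakDual.eval_continuous h).tendsto φ0
  have h2 := h1.comp htends
  have h3 : ((fun ψ : WeakDual ℝ H => ψ h) ∘ f) = fun t => ⟪x t, h⟫ := by
    funext t
    show (InnerProductSpace.toDual ℝ H (x t)) h = ⟪x t, h⟫
    exact InnerProductSpace.toDual_apply_apply
  rw [h3, hφ0w h] at h2
  have h4 := h2.sub_const ⟪w0, h⟫
  rw [sub_self] at h4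
  refine h4.congr fun t => ?_
  rw [inner_sub_left]
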